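/- arXiv:2306.06394 — 2 statements merged into one kernel-verified Lean document; each statement's English description precedes it below -/
import Mathlib

section
/- Assume (i) the performance-difference bound |J(π*) − J(π_θ)| ≤ (2 R_max / ((1−γ)(1−γ^c))) · E_{s∼d, g∼ν}[D_TV(π*(·|s,g), π_θ(·|s,g))] holds; (ii) d is absolutely continuous with respect to κ and its Radon–Nikodym derivative dd/dκ is κ-essentially bounded by a constant C ≥ 0; (iii) π* is φ-common in Π, i.e. E_{s∼κ, i∼Π, g∼ν}[D_TV(π*(·|s,g), π_{D,i}(·|s,g))] ≤ φ; and (iv) the map (s,g) ↦ D_TV(π*(·|s,g), π_θ(·|s,g)) and the maps (s,i,g) ↦ D_TV(π*(·|s,g), π_{D,i}(·|s,g)) and (s,i,g) ↦ D_TV(π_{D,i}(·|s,g), π_θ(·|s,g)) are measurable. Then, setting λ_H = (2 R_max / ((1−γ)(1−γ^c))) · C, one has |J(π*) − J(π_θ)| ≤ λ_H · φ + λ_H · E_{s∼κ, i∼Π, g∼ν}[D_TV(π_{D,i}(·|s,g), π_θ(·|s,g))]. -/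
open MeasureTheory
open scoped ENNReal

/-- Total variation distance between two measures:
`D_TV(P,Q) = sup over measurable sets A of |P(A) − Q(A)|`. -/
noncomputable def tvDist {T : Type*} [MeasurableSpace T] (P Q : Measure T) : ℝ :=
  ⨆ A : {A : Set T // MeasurableSet A}, |(P A.1).toReal - (Q A.1).toReal|

lemma tv_term_le_one {T : Type*} [MeasurableSpace T] (P Q : Measure T)
    [IsProbabilityMeasure P] [IsProbabilityMeasure Q] (A : Set T) :
    |(P A).toReal - (Q A).toReal| ≤ 1 := by
  have h1 : (P A).toReal ≤ 1 := by
    have := prob_le_one (μ := P) (s := A)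
    simpa using ENNReal.toReal_mono (by simp) this
  have h2 : (Q A).toReal ≤ 1 := by
    have := prob_le_one (μ := Q) (s := A)
    simpa using ENNReal.toReal_mono (by simp) this
  have h3 : 0 ≤ (P A).toReal := ENNReal.toReal_nonneg
  have h4 : 0 ≤ (Q A).toReal := ENNReal.toReal_nonneg
  rw [abs_sub_le_iff]; constructor <;> linarith

lemma tv_bdd {T : Type*} [MeasurableSpace T] (P Q : Measure T)
    [IsProbabilityMeasure P] [IsProbabilityMeasure Q] :
    BddAbove (Set.range fun A : {A : Set T // MeasurableSet A} =>
      |(P A.1).toReal - (Q A.1).toReal|) := by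
  refine ⟨1, ?_⟩
  rintro x ⟨A, rfl⟩
  exact tv_term_le_one P Q A.1

lemma tv_nonneg {T : Type*} [MeasurableSpace T] (P Q : Measure T)
    [IsProbabilityMeasure P] [IsProbabilityMeasure Q] : 0 ≤ tvDist P Q := by
  have := le_ciSup (tv_bdd P Q) ⟨∅, MeasurableSet.empty⟩
  simpa [tvDist] using le_trans (by simp) this

lemma tv_le_one {T : Type*} [MeasurableSpace T] (P Q : Measure T)
    [IsProbabilityMeasure P] [IsProbabilityMeasure Q] : tvDist P Q ≤ 1 := by
  refine ciSup_le fun A => tv_term_le_one P Q A.1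

lemma lintegral_le_one_aux {α : Type*} [MeasurableSpace α] (μ : Measure α)
    [IsProbabilityMeasure μ] (f : α → ENNReal) (hf : ∀ x, f x ≤ 1) :
    (∫⁻ x, f x ∂μ) ≤ 1 := by
  calc ∫⁻ x, f x ∂μ ≤ ∫⁻ _, 1 ∂μ := lintegral_mono hf
    _ = 1 := by simp

lemma tv_triangle {T : Type*} [MeasurableSpace T] (P Q R : Measure T)
    [IsProbabilityMeasure P] [IsProbabilityMeasure Q] [IsProbabilityMeasure R] :
    tvDist P R ≤ tvDist P Q + tvDist Q R := by
  refine ciSup_le fun A => ?_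
  have h1 : |(P A.1).toReal - (Q A.1).toReal| ≤ tvDist P Q := le_ciSup (tv_bdd P Q) A
  have h2 : |(Q A.1).toReal - (R A.1).toReal| ≤ tvDist Q R := le_ciSup (tv_bdd Q R) A
  calc |(P A.1).toReal - (R A.1).toReal|
      ≤ |(P A.1).toReal - (Q A.1).toReal| + |(Q A.1).toReal - (R A.1).toReal| :=
        abs_sub_le _ _ _
    _ ≤ _ := add_le_add h1 h2

/-- Higher-level suboptimality bound:
`|J(π*) − J(π_θ)| ≤ λ_H·φ + λ_H·E_{s∼κ, i∼Π, g∼ν}[D_TV(π_{D,i}(·|s,g), π_θ(·|s,g))]`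
with `λ_H = (2 R_max / ((1−γ)(1−γ^c))) · C`. -/
theorem higher_level_suboptimality_bound
    {S T G I : Type*} [MeasurableSpace S] [MeasurableSpace T] [MeasurableSpace G]
    [MeasurableSpace I]
    (κ d : Measure S) (ν : Measure G) (μI : Measure I)
    [IsProbabilityMeasure κ] [IsProbabilityMeasure d] [IsProbabilityMeasure ν]
    [IsProbabilityMeasure μI]
    (πD : I → S → G → Measure T) (πStar πθ : S → G → Measure T)
    (hπD : ∀ i s g, IsProbabilityMeasure (πD i s g))
    (hπStar : ∀ s g, IsProbabilityMeasure (πStar s g))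
    (hπθ : ∀ s g, IsProbabilityMeasure (πθ s g))
    (J : (S → G → Measure T) → ℝ)
    (Rmax γ φ C : ℝ) (c : ℕ)
    (hR : 0 ≤ Rmax) (hγ0 : 0 < γ) (hγ1 : γ < 1) (hc : 1 ≤ c)
    (hφ : 0 ≤ φ) (hC : 0 ≤ C)
    -- (i) performance-difference bound
    (hperf : |J πStar - J πθ| ≤ (2 * Rmax / ((1 - γ) * (1 - γ ^ c))) *
      ∫ p : S × G, tvDist (πStar p.1 p.2) (πθ p.1 p.2) ∂(d.prod ν))
    -- (ii) absolute continuity of `d` w.r.t. `κ` with κ-essentially bounded density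
    (hac : d ≪ κ)
    (hbound : ∀ᵐ s ∂κ, d.rnDeriv κ s ≤ ENNReal.ofReal C)
    -- (iii) `π*` is `φ`-common in `Π`
    (hcommon : ∫ p : S × I × G,
        tvDist (πStar p.1 p.2.2) (πD p.2.1 p.1 p.2.2) ∂(κ.prod (μI.prod ν)) ≤ φ)
    -- (iv) measurability of the total-variation maps
    (hm1 : Measurable fun p : S × G => tvDist (πStar p.1 p.2) (πθ p.1 p.2))
    (hm2 : Measurable fun p : S × I × G => tvDist (πStar p.1 p.2.2) (πD p.2.1 p.1 p.2.2))
    (hm3 : Measurable fun p : S × I × G => tvDist (πD p.2.1 p.1 p.2.2) (πθ p.1 p.2.2)) :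
    |J πStar - J πθ| ≤ (2 * Rmax / ((1 - γ) * (1 - γ ^ c))) * C * φ +
      (2 * Rmax / ((1 - γ) * (1 - γ ^ c))) * C *
        ∫ p : S × I × G,
          tvDist (πD p.2.1 p.1 p.2.2) (πθ p.1 p.2.2) ∂(κ.prod (μI.prod ν)) := by
  set K := 2 * Rmax / ((1 - γ) * (1 - γ ^ c)) with hK
  have hγc : γ ^ c < 1 := pow_lt_one₀ hγ0.le hγ1 (by omega)
  have hKnn : 0 ≤ K := by
    apply div_nonneg (by linarith)
    have : 0 < 1 - γ := by linarith
    nlinarith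
  -- ENNReal-valued integrands
  set g1 : S × G → ℝ≥0∞ := fun p => ENNReal.ofReal (tvDist (πStar p.1 p.2) (πθ p.1 p.2))
    with hg1def
  set g2 : S × I × G → ℝ≥0∞ :=
    fun p => ENNReal.ofReal (tvDist (πStar p.1 p.2.2) (πD p.2.1 p.1 p.2.2)) with hg2def
  set g3 : S × I × G → ℝ≥0∞ :=
    fun p => ENNReal.ofReal (tvDist (πD p.2.1 p.1 p.2.2) (πθ p.1 p.2.2)) with hg3def
  have hg1 : Measurable g1 := hm1.ennreal_ofReal
  have hg2 : Measurable g2 := hm2.ennreal_ofReal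
  have hg3 : Measurable g3 := hm3.ennreal_ofReal
  set big : Measure (S × I × G) := κ.prod (μI.prod ν) with hbig
  -- projection map
  set e : S × I × G → S × G := fun p => (p.1, p.2.2) with he_def
  have he : Measurable e := measurable_fst.prodMk (measurable_snd.comp measurable_snd)
  have hmap : big.map e = κ.prod ν := by
    have h := Measure.map_prod_map (f := id) (g := Prod.snd) κ (μI.prod ν)
      measurable_id measurable_snd
    have h2 : Measure.map Prod.snd (μI.prod ν) = ν := by simp
    have h3 : e = Prod.map id Prod.snd := rfl
    rw [h3, ← h, Measure.map_id, h2]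
  -- lintegrals
  set L1 := ∫⁻ p, g1 p ∂(d.prod ν) with hL1
  set L2 := ∫⁻ p, g1 p ∂(κ.prod ν) with hL2
  set L3 := ∫⁻ p, g2 p ∂big with hL3
  set L4 := ∫⁻ p, g3 p ∂big with hL4
  -- real integrals equal toReal of lintegrals
  have hI1 : (∫ p : S × G, tvDist (πStar p.1 p.2) (πθ p.1 p.2) ∂(d.prod ν)) = L1.toReal := by
    rw [hL1, integral_eq_lintegral_of_nonneg_ae ?_ hm1.aestronglyMeasurable]
    · filter_upwards with p
      haveI := hπStar p.1 p.2; haveI := hπθ p.1 p.2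
      exact tv_nonneg _ _
  have hI3 : (∫ p : S × I × G, tvDist (πStar p.1 p.2.2) (πD p.2.1 p.1 p.2.2) ∂big)
      = L3.toReal := by
    rw [hL3, integral_eq_lintegral_of_nonneg_ae ?_ hm2.aestronglyMeasurable]
    · filter_upwards with p
      haveI := hπStar p.1 p.2.2; haveI := hπD p.2.1 p.1 p.2.2
      exact tv_nonneg _ _
  have hI4 : (∫ p : S × I × G, tvDist (πD p.2.1 p.1 p.2.2) (πθ p.1 p.2.2) ∂big)
      = L4.toReal := by
    rw [hL4, integral_eq_lintegral_of_nonneg_ae ?_ hm3.aestronglyMeasurable]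
    · filter_upwards with p
      haveI := hπD p.2.1 p.1 p.2.2; haveI := hπθ p.1 p.2.2
      exact tv_nonneg _ _
  set I4 := ∫ p : S × I × G, tvDist (πD p.2.1 p.1 p.2.2) (πθ p.1 p.2.2) ∂big with hI4def
  have hI4nn : 0 ≤ I4 := by
    apply integral_nonneg
    intro p
    haveI := hπD p.2.1 p.1 p.2.2; haveI := hπθ p.1 p.2.2
    exact tv_nonneg _ _
  -- finiteness of L3, L4
  have hL3le : L3 ≤ 1 := by
    apply lintegral_le_one_aux
    intro p
    haveI := hπStar p.1 p.2.2; haveI := hπD p.2.1 p.1 p.2.2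
    exact ENNReal.ofReal_le_one.mpr (tv_le_one _ _)
  have hL4le : L4 ≤ 1 := by
    apply lintegral_le_one_aux
    intro p
    haveI := hπD p.2.1 p.1 p.2.2; haveI := hπθ p.1 p.2.2
    exact ENNReal.ofReal_le_one.mpr (tv_le_one _ _)
  have hL3top : L3 ≠ ⊤ := (lt_of_le_of_lt hL3le ENNReal.one_lt_top).ne
  have hL4top : L4 ≠ ⊤ := (lt_of_le_of_lt hL4le ENNReal.one_lt_top).ne
  have hL3φ : L3 ≤ ENNReal.ofReal φ := by
    rw [← ENNReal.ofReal_toReal hL3top]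
    exact ENNReal.ofReal_le_ofReal (hI3 ▸ hcommon)
  have hL4eq : L4 = ENNReal.ofReal I4 := by
    show L4 = ENNReal.ofReal I4
    rw [hI4, ENNReal.ofReal_toReal hL4top]
  -- step: L1 ≤ ofReal C * L2
  have hstep1 : L1 ≤ ENNReal.ofReal C * L2 := by
    have hh : Measurable fun s => ∫⁻ y, g1 (s, y) ∂ν := hg1.lintegral_prod_right'
    calc L1 = ∫⁻ s, ∫⁻ y, g1 (s, y) ∂ν ∂d := lintegral_prod g1 hg1.aemeasurable
      _ = ∫⁻ s, d.rnDeriv κ s * ∫⁻ y, g1 (s, y) ∂ν ∂κ :=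
          (lintegral_rnDeriv_mul hac hh.aemeasurable).symm
      _ ≤ ∫⁻ s, ENNReal.ofReal C * ∫⁻ y, g1 (s, y) ∂ν ∂κ := by
          refine lintegral_mono_ae (hbound.mono fun s hs => ?_)
          exact mul_le_mul_left hs _
      _ = ENNReal.ofReal C * ∫⁻ s, ∫⁻ y, g1 (s, y) ∂ν ∂κ := lintegral_const_mul _ hh
      _ = ENNReal.ofReal C * L2 := by
          rw [hL2, lintegral_prod g1 hg1.aemeasurable]
  -- step: L2 ≤ L3 + L4
  have hstep2 : L2 ≤ L3 + L4 := by
    have : L2 = ∫⁻ p, g1 (e p) ∂big := by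
      rw [hL2, ← hmap, lintegral_map hg1 he]
    rw [this]
    calc ∫⁻ p, g1 (e p) ∂big ≤ ∫⁻ p, g2 p + g3 p ∂big := by
          refine lintegral_mono fun p => ?_
          haveI := hπStar p.1 p.2.2; haveI := hπD p.2.1 p.1 p.2.2
          haveI := hπθ p.1 p.2.2
          have htri := tv_triangle (πStar p.1 p.2.2) (πD p.2.1 p.1 p.2.2) (πθ p.1 p.2.2)
          calc g1 (e p) = ENNReal.ofReal (tvDist (πStar p.1 p.2.2) (πθ p.1 p.2.2)) := rfl
            _ ≤ ENNReal.ofReal (tvDist (πStar p.1 p.2.2) (πD p.2.1 p.1 p.2.2) +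
                  tvDist (πD p.2.1 p.1 p.2.2) (πθ p.1 p.2.2)) :=
                ENNReal.ofReal_le_ofReal htri
            _ = g2 p + g3 p := ENNReal.ofReal_add (tv_nonneg _ _) (tv_nonneg _ _)
      _ = L3 + L4 := lintegral_add_left hg2 _
  -- combine
  have hL1bound : L1 ≤ ENNReal.ofReal (C * (φ + I4)) := by
    calc L1 ≤ ENNReal.ofReal C * L2 := hstep1
      _ ≤ ENNReal.ofReal C * (ENNReal.ofReal φ + ENNReal.ofReal I4) := by
          refine mul_le_mul_right ?_ _
          calc L2 ≤ L3 + L4 := hstep2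
            _ ≤ _ := add_le_add hL3φ hL4eq.le
      _ = ENNReal.ofReal (C * (φ + I4)) := by
          rw [← ENNReal.ofReal_add hφ hI4nn, ← ENNReal.ofReal_mul hC]
  have hL1real : L1.toReal ≤ C * (φ + I4) :=
    ENNReal.toReal_le_of_le_ofReal (by positivity) hL1bound
  calc |J πStar - J πθ| ≤ K * L1.toReal := by rw [← hI1]; exact hperf
    _ ≤ K * (C * (φ + I4)) := mul_le_mul_of_nonneg_left hL1real hKnn
    _ = K * C * φ + K * C * I4 := by ring
end

section
/- Assume (i) the performance-difference bound |J(π**) − J(π_θ)| ≤ (2 R_max / (1−γ)^2) · E_{s∼d, g∼ν}[D_TV(π**(·|s,g), π_θ(·|s,g))] holds; (ii) d is absolutely continuous with respect to κ and its Radon–Nikodym derivative dd/dκ is κ-essentially bounded by a constant C ≥ 0; (iii) π** is φ-common in Π, i.e. E_{s∼κ, i∼Π, g∼ν}[D_TV(π**(·|s,g), π_{D,i}(·|s,g))] ≤ φ; and (iv) the map (s,g) ↦ D_TV(π**(·|s,g), π_θ(·|s,g)) and the maps (s,i,g) ↦ D_TV(π**(·|s,g), π_{D,i}(·|s,g)) and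 (s,i,g) ↦ D_TV(π_{D,i}(·|s,g), π_θ(·|s,g)) are measurable. Then, setting λ_L = (2 R_max / (1−γ)^2) · C, one has |J(π**) − J(π_θ)| ≤ λ_L · φ + λ_L · E_{s∼κ, i∼Π, g∼ν}[D_TV(π_{D,i}(·|s,g), π_θ(·|s,g))]. -/
open MeasureTheory

section aux

variable {T : Type*} [MeasurableSpace T]

lemma tvDist_term_le_one (P Q : Measure T) [IsProbabilityMeasure P] [IsProbabilityMeasure Q]
    (A : {A : Set T // MeasurableSet A}) :
    |(P A.1).toReal - (Q A.1).toReal| ≤ 1 := by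
  have hP : (P A.1).toReal ≤ 1 :=
    ENNReal.toReal_le_of_le_ofReal zero_le_one (by simpa using prob_le_one (μ := P) (s := A.1))
  have hQ : (Q A.1).toReal ≤ 1 :=
    ENNReal.toReal_le_of_le_ofReal zero_le_one (by simpa using prob_le_one (μ := Q) (s := A.1))
  have hP0 : 0 ≤ (P A.1).toReal := ENNReal.toReal_nonneg
  have hQ0 : 0 ≤ (Q A.1).toReal := ENNReal.toReal_nonneg
  rw [abs_sub_le_iff]
  constructor <;> linarith

lemma tvDist_bddAbove (P Q : Measure T) [IsProbabilityMeasure P] [IsProbabilityMeasure Q] :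
    BddAbove (Set.range fun A : {A : Set T // MeasurableSet A} =>
      |(P A.1).toReal - (Q A.1).toReal|) := by
  refine ⟨1, ?_⟩
  rintro x ⟨A, rfl⟩
  exact tvDist_term_le_one P Q A

lemma tvDist_nonneg (P Q : Measure T) : 0 ≤ tvDist P Q :=
  Real.iSup_nonneg fun A => abs_nonneg _

lemma tvDist_le_one (P Q : Measure T) [IsProbabilityMeasure P] [IsProbabilityMeasure Q] :
    tvDist P Q ≤ 1 :=
  ciSup_le fun A => tvDist_term_le_one P Q A

lemma tvDist_triangle (P Q R : Measure T) [IsProbabilityMeasure P] [IsProbabilityMeasure Q]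
    [IsProbabilityMeasure R] :
    tvDist P R ≤ tvDist P Q + tvDist Q R := by
  refine ciSup_le fun A => ?_
  have h1 : |(P A.1).toReal - (Q A.1).toReal| ≤ tvDist P Q :=
    le_ciSup (tvDist_bddAbove P Q) A
  have h2 : |(Q A.1).toReal - (R A.1).toReal| ≤ tvDist Q R :=
    le_ciSup (tvDist_bddAbove Q R) A
  calc |(P A.1).toReal - (R A.1).toReal|
      ≤ |(P A.1).toReal - (Q A.1).toReal| + |(Q A.1).toReal - (R A.1).toReal| :=
        abs_sub_le _ _ _
    _ ≤ tvDist P Q + tvDist Q R := add_le_add h1 h2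

lemma integrable_of_bdd {α : Type*} [MeasurableSpace α] {μ : Measure α} [IsFiniteMeasure μ]
    {f : α → ℝ} (hf : Measurable f) (h0 : ∀ x, 0 ≤ f x) (h1 : ∀ x, f x ≤ 1) :
    Integrable f μ :=
  Integrable.mono' (integrable_const 1) hf.aestronglyMeasurable
    (ae_of_all _ fun x => by rw [Real.norm_eq_abs, abs_of_nonneg (h0 x)]; exact h1 x)

end aux

/-- Lower-level suboptimality bound:
`|J(π**) − J(π_θ)| ≤ λ_L·φ + λ_L·E_{s∼κ, i∼Π, g∼ν}[D_TV(π_{D,i}(·|s,g), π_θ(·|s,g))]`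
with `λ_L = (2 R_max / (1−γ)^2) · C`. -/
theorem lower_level_suboptimality_bound
    {S T G I : Type*} [MeasurableSpace S] [MeasurableSpace T] [MeasurableSpace G]
    [MeasurableSpace I]
    (κ d : Measure S) (ν : Measure G) (μI : Measure I)
    [IsProbabilityMeasure κ] [IsProbabilityMeasure d] [IsProbabilityMeasure ν]
    [IsProbabilityMeasure μI]
    (πD : I → S → G → Measure T) (πStarStar πθ : S → G → Measure T)
    (hπD : ∀ i s g, IsProbabilityMeasure (πD i s g))
    (hπStarStar : ∀ s g, IsProbabilityMeasure (πStarStar s g))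
    (hπθ : ∀ s g, IsProbabilityMeasure (πθ s g))
    (J : (S → G → Measure T) → ℝ)
    (Rmax γ φ C : ℝ)
    (hR : 0 ≤ Rmax) (hγ0 : 0 < γ) (hγ1 : γ < 1)
    (hφ : 0 ≤ φ) (hC : 0 ≤ C)
    -- (i) performance-difference bound
    (hperf : |J πStarStar - J πθ| ≤ (2 * Rmax / (1 - γ) ^ 2) *
      ∫ p : S × G, tvDist (πStarStar p.1 p.2) (πθ p.1 p.2) ∂(d.prod ν))
    -- (ii) absolute continuity of `d` w.r.t. `κ` with κ-essentially bounded density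
    (hac : d ≪ κ)
    (hbound : ∀ᵐ s ∂κ, d.rnDeriv κ s ≤ ENNReal.ofReal C)
    -- (iii) `π**` is `φ`-common in `Π`
    (hcommon : ∫ p : S × I × G,
        tvDist (πStarStar p.1 p.2.2) (πD p.2.1 p.1 p.2.2) ∂(κ.prod (μI.prod ν)) ≤ φ)
    -- (iv) measurability of the total-variation maps
    (hm1 : Measurable fun p : S × G => tvDist (πStarStar p.1 p.2) (πθ p.1 p.2))
    (hm2 : Measurable fun p : S × I × G =>
      tvDist (πStarStar p.1 p.2.2) (πD p.2.1 p.1 p.2.2))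
    (hm3 : Measurable fun p : S × I × G => tvDist (πD p.2.1 p.1 p.2.2) (πθ p.1 p.2.2)) :
    |J πStarStar - J πθ| ≤ (2 * Rmax / (1 - γ) ^ 2) * C * φ +
      (2 * Rmax / (1 - γ) ^ 2) * C *
        ∫ p : S × I × G,
          tvDist (πD p.2.1 p.1 p.2.2) (πθ p.1 p.2.2) ∂(κ.prod (μI.prod ν)) := by
  haveI := hπD; haveI := fun s g => hπStarStar s g; haveI := fun s g => hπθ s g
  set lam : ℝ := 2 * Rmax / (1 - γ) ^ 2 with hlam_def
  have hlam : 0 ≤ lam := div_nonneg (by linarith) (sq_nonneg _)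
  -- the three tv-distance functions
  set f1 : S × G → ℝ := fun p => tvDist (πStarStar p.1 p.2) (πθ p.1 p.2) with hf1
  set f2 : S × I × G → ℝ := fun p => tvDist (πStarStar p.1 p.2.2) (πD p.2.1 p.1 p.2.2) with hf2
  set f3 : S × I × G → ℝ := fun p => tvDist (πD p.2.1 p.1 p.2.2) (πθ p.1 p.2.2) with hf3
  have hf1_0 : ∀ p, 0 ≤ f1 p := fun p => tvDist_nonneg _ _
  have hf1_1 : ∀ p, f1 p ≤ 1 := fun p => tvDist_le_one _ _
  have hf2_0 : ∀ p, 0 ≤ f2 p := fun p => tvDist_nonneg _ _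
  have hf2_1 : ∀ p, f2 p ≤ 1 := fun p => tvDist_le_one _ _
  have hf3_0 : ∀ p, 0 ≤ f3 p := fun p => tvDist_nonneg _ _
  have hf3_1 : ∀ p, f3 p ≤ 1 := fun p => tvDist_le_one _ _
  -- F s = ∫ g, f1 (s, g) ∂ν
  set F : S → ℝ := fun s => ∫ g, f1 (s, g) ∂ν with hF
  have hF_sm : StronglyMeasurable F :=
    StronglyMeasurable.integral_prod_right (f := fun s g => f1 (s, g)) hm1.stronglyMeasurable
  have hF0 : ∀ s, 0 ≤ F s := fun s => integral_nonneg fun g => hf1_0 _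
  have hF1 : ∀ s, F s ≤ 1 := by
    intro s
    have hint : Integrable (fun g => f1 (s, g)) ν :=
      integrable_of_bdd (hm1.comp (measurable_prodMk_left)) (fun g => hf1_0 _)
        (fun g => hf1_1 _)
    calc F s ≤ ∫ _g : G, (1 : ℝ) ∂ν :=
          integral_mono hint (integrable_const 1) fun g => hf1_1 _
      _ = 1 := by simp
  -- Fubini on d.prod ν
  have hint1d : Integrable f1 (d.prod ν) := integrable_of_bdd hm1 hf1_0 hf1_1
  have hfub1 : ∫ p, f1 p ∂(d.prod ν) = ∫ s, F s ∂d := integral_prod f1 hint1d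
  -- change of measure d → κ
  have hFd_le : ∫ s, F s ∂d ≤ C * ∫ s, F s ∂κ := by
    have hFae : AEMeasurable (fun s => ENNReal.ofReal (F s)) κ :=
      (ENNReal.measurable_ofReal.comp hF_sm.measurable).aemeasurable
    have h1 : ∫ s, F s ∂d = (∫⁻ s, ENNReal.ofReal (F s) ∂d).toReal :=
      integral_eq_lintegral_of_nonneg_ae (ae_of_all _ hF0) hF_sm.aestronglyMeasurable
    have h2 : ∫⁻ s, ENNReal.ofReal (F s) ∂d
        = ∫⁻ s, d.rnDeriv κ s * ENNReal.ofReal (F s) ∂κ :=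
      (lintegral_rnDeriv_mul hac hFae).symm
    have h3 : ∫⁻ s, d.rnDeriv κ s * ENNReal.ofReal (F s) ∂κ
        ≤ ENNReal.ofReal C * ∫⁻ s, ENNReal.ofReal (F s) ∂κ := by
      rw [← lintegral_const_mul' _ _ ENNReal.ofReal_ne_top]
      exact lintegral_mono_ae (hbound.mono fun s hs => mul_le_mul_left hs _)
    have hfin : ∫⁻ s, ENNReal.ofReal (F s) ∂κ ≤ 1 := by
      calc ∫⁻ s, ENNReal.ofReal (F s) ∂κ ≤ ∫⁻ _s, 1 ∂κ :=
            lintegral_mono fun s => by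
              simpa using ENNReal.ofReal_le_ofReal (hF1 s)
        _ = 1 := by simp
    have hfin' : ∫⁻ s, ENNReal.ofReal (F s) ∂κ ≠ ⊤ := (hfin.trans_lt (by simp)).ne
    have h4 : (∫⁻ s, ENNReal.ofReal (F s) ∂d).toReal
        ≤ (ENNReal.ofReal C * ∫⁻ s, ENNReal.ofReal (F s) ∂κ).toReal := by
      refine ENNReal.toReal_mono ?_ (by rw [h2]; exact h3)
      exact ENNReal.mul_ne_top ENNReal.ofReal_ne_top hfin'
    have h5 : (ENNReal.ofReal C * ∫⁻ s, ENNReal.ofReal (F s) ∂κ).toReal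
        = C * ∫ s, F s ∂κ := by
      rw [ENNReal.toReal_mul, ENNReal.toReal_ofReal hC,
        ← integral_eq_lintegral_of_nonneg_ae (ae_of_all _ hF0) hF_sm.aestronglyMeasurable]
    rw [h1]
    exact h4.trans_eq h5
  -- triple-product representation of ∫ F ∂κ
  have hmeas13 : Measurable fun p : S × I × G => f1 (p.1, p.2.2) :=
    hm1.comp (measurable_fst.prodMk measurable_snd.snd)
  have hint13 : Integrable (fun p : S × I × G => f1 (p.1, p.2.2)) (κ.prod (μI.prod ν)) :=
    integrable_of_bdd hmeas13 (fun p => hf1_0 _) (fun p => hf1_1 _)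
  have htriple : ∫ s, F s ∂κ = ∫ p : S × I × G, f1 (p.1, p.2.2) ∂(κ.prod (μI.prod ν)) := by
    rw [integral_prod _ hint13]
    refine integral_congr_ae (ae_of_all _ fun s => ?_)
    have hintq : Integrable (fun q : I × G => f1 (s, q.2)) (μI.prod ν) :=
      integrable_of_bdd (hm1.comp (measurable_const.prodMk measurable_snd))
        (fun q => hf1_0 _) (fun q => hf1_1 _)
    show F s = ∫ q : I × G, f1 (s, q.2) ∂(μI.prod ν)
    rw [integral_prod _ hintq]
    simp [hF]
  -- pointwise triangle inequality and integration
  have hint2 : Integrable f2 (κ.prod (μI.prod ν)) := integrable_of_bdd hm2 hf2_0 hf2_1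
  have hint3 : Integrable f3 (κ.prod (μI.prod ν)) := integrable_of_bdd hm3 hf3_0 hf3_1
  have htri : ∫ p : S × I × G, f1 (p.1, p.2.2) ∂(κ.prod (μI.prod ν))
      ≤ (∫ p, f2 p ∂(κ.prod (μI.prod ν))) + ∫ p, f3 p ∂(κ.prod (μI.prod ν)) := by
    rw [← integral_add hint2 hint3]
    refine integral_mono hint13 (hint2.add hint3) fun p => ?_
    exact tvDist_triangle _ _ _
  -- put everything together
  have hI3_nonneg : 0 ≤ ∫ p, f3 p ∂(κ.prod (μI.prod ν)) := integral_nonneg hf3_0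
  have hFκ : ∫ s, F s ∂κ ≤ φ + ∫ p, f3 p ∂(κ.prod (μI.prod ν)) := by
    rw [htriple]
    exact htri.trans (add_le_add_left hcommon _)
  have hchain : |J πStarStar - J πθ| ≤ lam * (C * (φ + ∫ p, f3 p ∂(κ.prod (μI.prod ν)))) := by
    calc |J πStarStar - J πθ| ≤ lam * ∫ p, f1 p ∂(d.prod ν) := hperf
      _ = lam * ∫ s, F s ∂d := by rw [hfub1]
      _ ≤ lam * (C * ∫ s, F s ∂κ) := by
          exact mul_le_mul_of_nonneg_left hFd_le hlam
      _ ≤ lam * (C * (φ + ∫ p, f3 p ∂(κ.prod (μI.prod ν)))) := by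
          exact mul_le_mul_of_nonneg_left (mul_le_mul_of_nonneg_left hFκ hC) hlam
  calc |J πStarStar - J πθ| ≤ lam * (C * (φ + ∫ p, f3 p ∂(κ.prod (μI.prod ν)))) := hchain
    _ = lam * C * φ + lam * C * ∫ p, f3 p ∂(κ.prod (μI.prod ν)) := by ring
end
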